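/- For ω ∈ F_n let n₄(ω) be the number of a ∈ {1, …, n−1} such that b̃_{a-1} = 1, b̃_a = 1, b_{a-1} ≠ 1, and b_a ≠ 1. Then for every ε > 0, the conditional probability μ( (1/9 − ε)·n < n₄ < (1/9 + ε)·n ∣ F_n ) tends to 1 as n → ∞. -/

import Mathlib

open MeasureTheory ProbabilityTheory Filter

/-- `μ` is the infinite product over `ℕ` of the uniform probability measure on
`{-1,0,1} ⊆ ℤ`, characterized by its values on cylinder sets.  (Taking `n = 0`
shows `μ` is a probability measure.) -/
def IsCDGProductMeasure (μ : Measure (ℕ → ℤ)) : Prop :=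
  ∀ (n : ℕ) (c : ℕ → ℤ),
    μ {ω : ℕ → ℤ | ∀ i < n, ω i = c i} =
      ∏ i ∈ Finset.range n,
        (if c i = -1 ∨ c i = 0 ∨ c i = 1 then (1 / 3 : ENNReal) else 0)

/-- `S n b = ∑_{i=0}^{n-1} 2^(n-1-i) b i`. -/
def cdgS (n : ℕ) (b : ℕ → ℤ) : ℤ := ∑ i ∈ Finset.range n, 2 ^ (n - 1 - i) * b i

/-- The standard form `b̃ a` of the sequence `b` for length `n`: the binary digit of
`S = ∑_{i<n} 2^(n-1-i) b i` in position `n-1-a`, so that (in the "first 1" case, where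
`1 ≤ S ≤ 2^n − 1`) one has `S = ∑_{a<n} 2^(n-1-a) b̃ a` with each `b̃ a ∈ {0,1}`. -/
def btilde (n : ℕ) (b : ℕ → ℤ) (a : ℕ) : ℕ := (cdgS n b).toNat / 2 ^ (n - 1 - a) % 2

/-- The "first 1" event `F_n` for length `n`: there is `j < n` with `b j = 1` and
`b k = 0` for all `k < j`. -/
def firstOne (n : ℕ) : Set (ℕ → ℤ) :=
  {b : ℕ → ℤ | ∃ j < n, b j = 1 ∧ ∀ k < j, b k = 0}

namespace CDG8

noncomputable section

attribute [local instance] Classical.propDecidable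

/-- extension of a finite tuple by zeros -/
def ext (n : ℕ) (v : Fin n → ℤ) : ℕ → ℤ := fun i => if h : i < n then v ⟨i, h⟩ else 0

/-- cylinder set -/
def cyl (n : ℕ) (v : Fin n → ℤ) : Set (ℕ → ℤ) := {ω | ∀ i < n, ω i = ext n v i}

def box (n : ℕ) : Finset (Fin n → ℤ) :=
  Fintype.piFinset fun _ => ({-1, 0, 1} : Finset ℤ)

lemma measurableSet_cyl (n : ℕ) (v : Fin n → ℤ) : MeasurableSet (cyl n v) := by
  have : cyl n v = ⋂ i ∈ Finset.range n, (fun ω : ℕ → ℤ => ω i) ⁻¹' {ext n v i} := by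
    ext ω; simp [cyl, Set.mem_iInter]
  rw [this]
  exact MeasurableSet.biInter (Finset.range n).countable_toSet
    (fun i _ => (measurable_pi_apply i) (MeasurableSet.singleton _))

lemma mem_cyl_ext (n : ℕ) (v : Fin n → ℤ) : ext n v ∈ cyl n v := fun i _ => rfl

lemma pairwise_disjoint_cyl (n : ℕ) :
    Pairwise (Function.onFun Disjoint fun v : Fin n → ℤ => cyl n v) := by
  intro v w hvw
  rw [Function.onFun, Set.disjoint_left]
  intro ω hv hw
  apply hvw
  funext i
  have h1 := hv i i.2
  have h2 := hw i i.2
  simp only [ext] at h1 h2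
  rw [dif_pos i.2] at h1 h2
  simp only [Fin.eta] at h1 h2
  rw [← h1, ← h2]

lemma iUnion_cyl (n : ℕ) : (⋃ v : Fin n → ℤ, cyl n v) = Set.univ := by
  ext ω
  simp only [Set.mem_iUnion, Set.mem_univ, iff_true]
  exact ⟨fun i => ω i, fun i hi => by simp [ext, hi]⟩

lemma measure_cyl (μ : Measure (ℕ → ℤ)) (hμ : IsCDGProductMeasure μ) (n : ℕ)
    (v : Fin n → ℤ) :
    μ (cyl n v) = if v ∈ box n then ((1 : ENNReal) / 3) ^ n else 0 := by
  have := hμ n (ext n v)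
  rw [cyl, this]
  by_cases hv : v ∈ box n
  · rw [if_pos hv, Finset.prod_congr rfl, Finset.prod_const, Finset.card_range]
    intro i hi
    rw [Finset.mem_range] at hi
    have he : ext n v i = v ⟨i, hi⟩ := by simp [ext, hi]
    have hv2 : v ∈ Fintype.piFinset (fun _ : Fin n => ({-1, 0, 1} : Finset ℤ)) := hv
    have hv' : ∀ a : Fin n, v a = -1 ∨ v a = 0 ∨ v a = 1 := by
      intro a
      have := Fintype.mem_piFinset.mp hv2 a
      simpa using this
    rw [if_pos]
    rw [he]
    exact hv' ⟨i, hi⟩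
  · rw [if_neg hv]
    rw [box, Fintype.mem_piFinset] at hv
    push_neg at hv
    obtain ⟨i, hi⟩ := hv
    apply Finset.prod_eq_zero (Finset.mem_range.mpr i.2)
    rw [if_neg]
    have : ext n v i = v i := by simp [ext, i.2]
    rw [this]
    simpa using hi

/-- A set depending only on coordinates `< n`. -/
def DependsOn (E : Set (ℕ → ℤ)) (n : ℕ) : Prop :=
  ∀ ω ω' : ℕ → ℤ, (∀ i < n, ω i = ω' i) → (ω ∈ E ↔ ω' ∈ E)

lemma dependsOn_decomp {E : Set (ℕ → ℤ)} {n : ℕ} (hE : DependsOn E n) :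
    E = ⋃ v : Fin n → ℤ, (if ext n v ∈ E then cyl n v else ∅) := by
  ext ω
  simp only [Set.mem_iUnion]
  constructor
  · intro hω
    refine ⟨fun i => ω i, ?_⟩
    have hmem : ω ∈ cyl n (fun i => ω i) := fun i hi => by simp [ext, hi]
    have : ext n (fun i : Fin n => ω i) ∈ E := by
      rw [← hE ω _ (fun i hi => by simp [ext, hi])]
      exact hω
    rw [if_pos this]; exact hmem
  · rintro ⟨v, hv⟩
    by_cases h : ext n v ∈ E
    · rw [if_pos h] at hv
      exact (hE ω (ext n v) hv).mpr h
    · rw [if_neg h] at hv; exact absurd hv (Set.notMem_empty ω)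

lemma measurableSet_of_dependsOn {E : Set (ℕ → ℤ)} {n : ℕ} (hE : DependsOn E n) :
    MeasurableSet E := by
  rw [dependsOn_decomp hE]
  refine MeasurableSet.iUnion fun v => ?_
  split_ifs
  · exact measurableSet_cyl n v
  · exact MeasurableSet.empty

lemma measure_of_dependsOn (μ : Measure (ℕ → ℤ)) (hμ : IsCDGProductMeasure μ)
    {E : Set (ℕ → ℤ)} {n : ℕ} (hE : DependsOn E n) :
    μ E = ((box n).filter (fun v => ext n v ∈ E)).card * ((1 : ENNReal) / 3) ^ n := by
  conv_lhs => rw [dependsOn_decomp hE]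
  rw [measure_iUnion]
  · have : ∀ v : Fin n → ℤ, μ (if ext n v ∈ E then cyl n v else ∅) =
        if v ∈ (box n).filter (fun v => ext n v ∈ E) then ((1:ENNReal)/3)^n else 0 := by
      intro v
      by_cases h : ext n v ∈ E
      · rw [if_pos h, measure_cyl μ hμ n v]
        by_cases hb : v ∈ box n
        · rw [if_pos hb, if_pos (Finset.mem_filter.mpr ⟨hb, h⟩)]
        · rw [if_neg hb, if_neg (fun hc => hb (Finset.mem_filter.mp hc).1)]
      · rw [if_neg h, measure_empty]
        split_ifs with hc
        · exact absurd (Finset.mem_filter.mp hc).2 h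
        · rfl
    rw [tsum_congr this, tsum_eq_sum (s := (box n).filter (fun v => ext n v ∈ E))
      (fun v hv => if_neg hv)]
    rw [Finset.sum_congr rfl (fun x hx => if_pos hx), Finset.sum_const, nsmul_eq_mul]
  · intro v w hvw
    have hd := pairwise_disjoint_cyl n hvw
    by_cases h1 : ext n v ∈ E <;> by_cases h2 : ext n w ∈ E <;>
      simp only [Function.onFun, if_pos, if_neg, h1, h2, if_true, if_false] <;>
      simp [Function.onFun] at hd ⊢ <;> try exact hd
  · intro v
    split_ifs
    · exact measurableSet_cyl n v
    · exact MeasurableSet.empty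


def tail (n a : ℕ) (b : ℕ → ℤ) : ℤ := ∑ i ∈ Finset.Ico (a + 1) n, 2 ^ (n - 1 - i) * b i

def gval (n a : ℕ) (b : ℕ → ℤ) : ℤ := if tail n a b < 0 then 0 else -1

def ev (n a : ℕ) (b : ℕ → ℤ) : Prop := b (a - 1) = 0 ∧ b a = gval n a b

def InBox (n : ℕ) (b : ℕ → ℤ) : Prop := ∀ i < n, b i = -1 ∨ b i = 0 ∨ b i = 1

lemma geom_sum_int (m : ℕ) : ∑ k ∈ Finset.range m, (2 : ℤ) ^ k = 2 ^ m - 1 := by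
  induction m with
  | zero => simp
  | succ m ih => rw [Finset.sum_range_succ, ih]; ring

lemma geom_Ico {a n : ℕ} (ha : a < n) :
    ∑ i ∈ Finset.Ico (a + 1) n, (2 : ℤ) ^ (n - 1 - i) = 2 ^ (n - 1 - a) - 1 := by
  rw [← geom_sum_int (n - 1 - a)]
  apply Finset.sum_nbij' (i := fun i => n - 1 - i) (j := fun k => n - 1 - k)
  · intro i hi; rw [Finset.mem_Ico] at hi; rw [Finset.mem_range]; omega
  · intro k hk; rw [Finset.mem_range] at hk; rw [Finset.mem_Ico]; omega
  · intro i hi; rw [Finset.mem_Ico] at hi; omega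
  · intro k hk; rw [Finset.mem_range] at hk; omega
  · intro i hi; rfl

lemma tail_bound {n a : ℕ} {b : ℕ → ℤ} (hb : InBox n b) (ha : a < n) :
    |tail n a b| ≤ 2 ^ (n - 1 - a) - 1 := by
  calc |tail n a b| ≤ ∑ i ∈ Finset.Ico (a + 1) n, |2 ^ (n - 1 - i) * b i| :=
        Finset.abs_sum_le_sum_abs _ _
    _ ≤ ∑ i ∈ Finset.Ico (a + 1) n, (2 : ℤ) ^ (n - 1 - i) := by
        apply Finset.sum_le_sum
        intro i hi
        rw [Finset.mem_Ico] at hi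
        rw [abs_mul, abs_pow]
        have hbi : |b i| ≤ 1 := by rcases hb i hi.2 with h | h | h <;> rw [h] <;> norm_num
        calc |(2:ℤ)| ^ (n-1-i) * |b i| ≤ |(2:ℤ)| ^ (n-1-i) * 1 := by
              apply mul_le_mul_of_nonneg_left hbi (by positivity)
          _ = 2 ^ (n-1-i) := by norm_num
    _ = 2 ^ (n - 1 - a) - 1 := geom_Ico ha

lemma cdgS_decomp (n a : ℕ) (b : ℕ → ℤ) (ha : a < n) :
    cdgS n b = tail n a b +
      (2 * (∑ i ∈ Finset.range a, 2 ^ (a - 1 - i) * b i) + b a) * 2 ^ (n - 1 - a) := by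
  rw [cdgS, ← Finset.sum_range_add_sum_Ico _ ha.le,
    Finset.sum_eq_sum_Ico_succ_bot ha]
  have h1 : ∀ i ∈ Finset.range a, (2:ℤ) ^ (n - 1 - i) * b i
      = 2 ^ (a - 1 - i) * b i * (2 * 2 ^ (n - 1 - a)) := by
    intro i hi
    rw [Finset.mem_range] at hi
    have : (2:ℤ) ^ (n - 1 - i) = 2 ^ (a - 1 - i) * (2 * 2 ^ (n - 1 - a)) := by
      rw [← pow_succ', ← pow_add]
      congr 1
      omega
    rw [this]; ring
  rw [Finset.sum_congr rfl h1, ← Finset.sum_mul]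
  rw [tail]
  ring

lemma digit_eq {n a : ℕ} {b : ℕ → ℤ} (hb : InBox n b) (hS : 0 ≤ cdgS n b) (ha : a < n) :
    (btilde n b a : ℤ) = (b a + (if tail n a b < 0 then -1 else 0)) % 2 := by
  set e := n - 1 - a with he
  have h2e : (0:ℤ) < 2 ^ e := by positivity
  have htl := tail_bound hb ha
  rw [abs_le] at htl
  have hkey := cdgS_decomp n a b ha
  set P := ∑ i ∈ Finset.range a, (2:ℤ) ^ (a - 1 - i) * b i with hP
  -- tail / 2^e = γ
  have hγ : tail n a b / 2 ^ e = (if tail n a b < 0 then -1 else 0) := by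
    split_ifs with ht
    · have : tail n a b = (tail n a b + 2 ^ e) + (-1) * 2 ^ e := by ring
      rw [this, Int.add_mul_ediv_right _ _ (ne_of_gt h2e),
        Int.ediv_eq_zero_of_lt (by linarith) (by linarith)]
      norm_num
    · exact Int.ediv_eq_zero_of_lt (by linarith) (by linarith)
  have hdiv : cdgS n b / 2 ^ e = tail n a b / 2 ^ e + (2 * P + b a) := by
    rw [hkey, Int.add_mul_ediv_right _ _ (ne_of_gt h2e)]
  have hcast : (btilde n b a : ℤ) = (cdgS n b / 2 ^ e) % 2 := by
    rw [btilde, ← he]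
    push_cast [Int.natCast_ediv]
    rw [Int.toNat_of_nonneg hS]
  rw [hcast, hdiv, hγ]
  have : (if tail n a b < 0 then (-1:ℤ) else 0) + (2 * P + b a)
      = (b a + (if tail n a b < 0 then -1 else 0)) + P * 2 := by ring
  rw [this, Int.add_mul_emod_self_right]

lemma single_iff {n a : ℕ} {b : ℕ → ℤ} (hb : InBox n b) (hS : 0 ≤ cdgS n b) (ha : a < n) :
    (btilde n b a = 1 ∧ b a ≠ 1) ↔ b a = gval n a b := by
  have hd := digit_eq hb hS ha
  have hba := hb a ha
  have hb1 : btilde n b a = 1 ↔ (btilde n b a : ℤ) = 1 := by omega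
  rw [hb1, hd, gval]
  rcases hba with h | h | h <;> rw [h] <;> split_ifs <;> norm_num

lemma tail_succ {n a : ℕ} (b : ℕ → ℤ) (ha1 : 1 ≤ a) (ha : a < n) :
    tail n (a - 1) b = 2 ^ (n - 1 - a) * b a + tail n a b := by
  rw [tail, tail]
  have : a - 1 + 1 = a := by omega
  rw [this, Finset.sum_eq_sum_Ico_succ_bot ha]

lemma pair_iff {n a : ℕ} {b : ℕ → ℤ} (hb : InBox n b) (hS : 0 ≤ cdgS n b)
    (ha1 : 1 ≤ a) (ha : a < n) :
    (btilde n b (a - 1) = 1 ∧ btilde n b a = 1 ∧ b (a - 1) ≠ 1 ∧ b a ≠ 1) ↔ ev n a b := by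
  have h2e : (0:ℤ) < 2 ^ (n - 1 - a) := by positivity
  have htl := tail_bound hb ha
  rw [abs_le] at htl
  have hA := single_iff hb hS ha
  have hA' := single_iff hb hS (show a - 1 < n by omega)
  have hts := tail_succ b ha1 ha
  constructor
  · rintro ⟨h1, h2, h3, h4⟩
    have hga : b a = gval n a b := hA.mp ⟨h2, h4⟩
    have hneg : tail n (a - 1) b < 0 := by
      rw [hts, hga, gval]
      split_ifs with ht
      · simpa using ht
      · push_neg at ht
        nlinarith [htl.2]
    have hg' : gval n (a - 1) b = 0 := by rw [gval, if_pos hneg]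
    have := hA'.mp ⟨h1, h3⟩
    exact ⟨by rw [this, hg'], hga⟩
  · rintro ⟨h1, h2⟩
    have hneg : tail n (a - 1) b < 0 := by
      rw [hts, h2, gval]
      split_ifs with ht
      · simpa using ht
      · push_neg at ht
        nlinarith [htl.2]
    have hg' : gval n (a - 1) b = 0 := by rw [gval, if_pos hneg]
    have h1' : b (a-1) = gval n (a-1) b := by rw [h1, hg']
    obtain ⟨c1, c3⟩ := hA'.mpr h1'
    obtain ⟨c2, c4⟩ := hA.mpr h2
    exact ⟨c1, c2, c3, c4⟩

/-- On `firstOne` with witness `j`, prefix sums vanish and `S ≥ 1`. -/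
lemma tail_first {n j : ℕ} {b : ℕ → ℤ} (hb : InBox n b) (hj : j < n) (hbj : b j = 1)
    (h0 : ∀ k < j, b k = 0) {a : ℕ} (haj : a < j) : 1 ≤ tail n a b := by
  have hsplit : tail n a b = (∑ i ∈ Finset.Ico (a+1) j, 2 ^ (n-1-i) * b i)
      + (2 ^ (n-1-j) * b j + tail n j b) := by
    rw [tail, ← Finset.sum_Ico_consecutive _ (by omega : a+1 ≤ j) hj.le,
      Finset.sum_eq_sum_Ico_succ_bot hj]
    rw [tail]
  have hz : (∑ i ∈ Finset.Ico (a+1) j, (2:ℤ) ^ (n-1-i) * b i) = 0 := by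
    apply Finset.sum_eq_zero
    intro i hi
    rw [Finset.mem_Ico] at hi
    rw [h0 i hi.2]; ring
  have htl := tail_bound hb hj
  rw [abs_le] at htl
  rw [hsplit, hz, hbj]
  linarith [htl.1]

lemma cdgS_pos {n : ℕ} {b : ℕ → ℤ} (hb : InBox n b) (hF : b ∈ firstOne n) :
    1 ≤ cdgS n b := by
  obtain ⟨j, hj, hbj, h0⟩ := hF
  have hkey := cdgS_decomp n j b hj
  have hP : (∑ i ∈ Finset.range j, (2:ℤ) ^ (j - 1 - i) * b i) = 0 := by
    apply Finset.sum_eq_zero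
    intro i hi
    rw [Finset.mem_range] at hi
    rw [h0 i hi]; ring
  have htl := tail_bound hb hj
  rw [abs_le] at htl
  rw [hkey, hP, hbj]
  have h2e : (1:ℤ) ≤ 2 ^ (n - 1 - j) := one_le_pow₀ (by norm_num : (1:ℤ) ≤ 2)
  linarith [htl.1]

lemma not_ev_le {n j a : ℕ} {b : ℕ → ℤ} (hb : InBox n b) (hj : j < n) (hbj : b j = 1)
    (h0 : ∀ k < j, b k = 0) (ha1 : 1 ≤ a) (ha : a < n) (haj : a < j + 2) :
    ¬ ev n a b := by
  rintro ⟨h1, h2⟩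
  rcases Nat.lt_or_ge a j with h | h
  · -- a < j : b a = 0 but tail ≥ 1 so gval = -1
    have := tail_first hb hj hbj h0 h
    rw [gval, if_neg (by linarith)] at h2
    rw [h0 a h] at h2
    norm_num at h2
  · rcases Nat.eq_or_lt_of_le h with h' | h'
    · -- a = j : b a = 1 but gval ∈ {0, -1}
      subst h'
      rw [hbj, gval] at h2
      split_ifs at h2 <;> norm_num at h2
    · -- a = j + 1 : b (a-1) = b j = 1 ≠ 0
      have : a - 1 = j := by omega
      rw [this, hbj] at h1
      norm_num at h1


def pbox (n : ℕ) (S : Finset ℕ) (w : ℕ → ℤ) : Finset (Fin n → ℤ) :=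
  Fintype.piFinset fun i => if (i : ℕ) ∈ S then ({w (i : ℕ)} : Finset ℤ) else {-1, 0, 1}

lemma mem_pbox {n : ℕ} {S : Finset ℕ} {w : ℕ → ℤ} {v : Fin n → ℤ} :
    v ∈ pbox n S w ↔ ∀ i : Fin n,
      ((i : ℕ) ∈ S → v i = w (i : ℕ)) ∧
      ((i : ℕ) ∉ S → v i = -1 ∨ v i = 0 ∨ v i = 1) := by
  rw [pbox, Fintype.mem_piFinset]
  apply forall_congr'
  intro i
  by_cases h : (i : ℕ) ∈ S <;> simp [h]

lemma card_pbox (n : ℕ) {S : Finset ℕ} (w : ℕ → ℤ) (hS : ∀ s ∈ S, s < n) :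
    (pbox n S w).card = 3 ^ (n - S.card) := by
  rw [pbox, Fintype.card_piFinset]
  have h1 : ∀ i : Fin n,
      (if (i : ℕ) ∈ S then ({w (i : ℕ)} : Finset ℤ) else {-1, 0, 1}).card
        = if (i : ℕ) ∈ S then 1 else 3 := by
    intro i
    split_ifs <;> simp
  rw [Finset.prod_congr rfl (fun i _ => h1 i), Finset.prod_ite, Finset.prod_const,
    Finset.prod_const, one_pow, one_mul]
  congr 1
  have hcard : (Finset.univ.filter (fun i : Fin n => (i : ℕ) ∈ S)).card = S.card := by
    refine Finset.card_bij (fun i _ => (i : ℕ)) ?_ ?_ ?_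
    · intro i hi; exact (Finset.mem_filter.mp hi).2
    · intro i hi i' hi' h; exact Fin.ext h
    · intro s hs
      exact ⟨⟨s, hS s hs⟩, Finset.mem_filter.mpr ⟨Finset.mem_univ _, hs⟩, rfl⟩
  have := Finset.card_filter_add_card_filter_not
    (s := (Finset.univ : Finset (Fin n))) (p := fun i : Fin n => (i : ℕ) ∈ S)
  rw [Finset.card_univ, Fintype.card_fin] at this
  omega

def wj (j : ℕ) : ℕ → ℤ := fun i => if i = j then 1 else 0

def Tj (n j : ℕ) : Finset (Fin n → ℤ) := pbox n (Finset.range (j + 1)) (wj j)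

lemma ext_lt {n : ℕ} (v : Fin n → ℤ) {i : ℕ} (hi : i < n) : ext n v i = v ⟨i, hi⟩ :=
  dif_pos hi

lemma ext_val {n : ℕ} (v : Fin n → ℤ) (i : Fin n) : ext n v (i : ℕ) = v i := by
  rw [ext_lt v i.2]

lemma card_Tj {n j : ℕ} (hj : j < n) : (Tj n j).card = 3 ^ (n - (j + 1)) := by
  rw [Tj, card_pbox n (wj j) (fun s hs => by rw [Finset.mem_range] at hs; omega),
    Finset.card_range]

lemma Tj_inBox {n j : ℕ} {v : Fin n → ℤ} (hv : v ∈ Tj n j) : InBox n (ext n v) := by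
  intro i hi
  rw [ext_lt v hi]
  have := mem_pbox.mp hv ⟨i, hi⟩
  by_cases h : i ∈ Finset.range (j + 1)
  · rw [this.1 h, wj]
    split_ifs <;> norm_num
  · exact this.2 h

lemma Tj_first {n j : ℕ} {v : Fin n → ℤ} (hj : j < n) (hv : v ∈ Tj n j) :
    ext n v j = 1 ∧ ∀ k < j, ext n v k = 0 := by
  constructor
  · rw [ext_lt v hj]
    have := (mem_pbox.mp hv ⟨j, hj⟩).1 (by simp)
    rw [this, wj, if_pos rfl]
  · intro k hk
    rw [ext_lt v (by omega : k < n)]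
    have := (mem_pbox.mp hv ⟨k, by omega⟩).1
      (by simp only [Fin.val_mk, Finset.mem_range]; omega)
    rw [this, wj]
    simp only [Fin.val_mk]
    rw [if_neg (by omega)]

lemma Tj_firstOne {n j : ℕ} {v : Fin n → ℤ} (hj : j < n) (hv : v ∈ Tj n j) :
    ext n v ∈ firstOne n :=
  ⟨j, hj, (Tj_first hj hv).1, (Tj_first hj hv).2⟩

lemma filterF_eq (n : ℕ) :
    (box n).filter (fun v => ext n v ∈ firstOne n)
      = (Finset.range n).biUnion (fun j => Tj n j) := by
  ext v
  simp only [Finset.mem_filter, Finset.mem_biUnion, Finset.mem_range]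
  constructor
  · rintro ⟨hbox, j, hj, h1, h0⟩
    refine ⟨j, hj, mem_pbox.mpr fun i => ⟨fun hiS => ?_, fun hiS => ?_⟩⟩
    · rw [Finset.mem_range] at hiS
      rcases Nat.lt_or_ge (i : ℕ) j with h | h
      · rw [← ext_val v i, h0 _ h, wj, if_neg (by omega)]
      · have hij : (i : ℕ) = j := by omega
        rw [← ext_val v i, hij, h1, wj, if_pos rfl]
    · have hv2 : v ∈ Fintype.piFinset (fun _ : Fin n => ({-1, 0, 1} : Finset ℤ)) := hbox
      have := Fintype.mem_piFinset.mp hv2 i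
      simpa using this
  · rintro ⟨j, hj, hv⟩
    refine ⟨?_, j, hj, (Tj_first hj hv).1, (Tj_first hj hv).2⟩
    have : ∀ i : Fin n, v i = -1 ∨ v i = 0 ∨ v i = 1 := by
      intro i
      rw [← ext_val v i]
      exact Tj_inBox hv (i : ℕ) i.2
    rw [box, Fintype.mem_piFinset]
    intro i
    simpa using this i

lemma Tj_pairwiseDisjoint (n : ℕ) :
    (↑(Finset.range n) : Set ℕ).PairwiseDisjoint (fun j => Tj n j) := by
  intro i hi j hj hij
  simp only [Finset.coe_range, Set.mem_Iio] at hi hj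
  rw [Function.onFun, Finset.disjoint_left]
  intro v hvi hvj
  have h1 := (Tj_first hi hvi).1
  have h2 := (Tj_first hj hvj).1
  have h3 := (Tj_first hi hvi).2
  have h4 := (Tj_first hj hvj).2
  rcases Nat.lt_or_ge i j with h | h
  · rw [h4 i h] at h1; norm_num at h1
  · have : j < i := by omega
    rw [h3 j this] at h2; norm_num at h2

lemma ext_update (n : ℕ) (v : Fin n → ℤ) (i : Fin n) (z : ℤ) :
    ext n (Function.update v i z) = Function.update (ext n v) (i : ℕ) z := by
  funext k
  rcases Nat.lt_or_ge k n with hk | hk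
  · rw [ext_lt _ hk, Function.update_apply, Function.update_apply]
    by_cases h : (⟨k, hk⟩ : Fin n) = i
    · rw [if_pos h, if_pos (by rw [← h])]
    · rw [if_neg h, if_neg (fun hc => h (Fin.ext hc)), ext_lt v hk]
  · have h1 : ext n (Function.update v i z) k = 0 := dif_neg (by omega)
    have h2 : ext n v k = 0 := dif_neg (by omega)
    rw [h1, Function.update_apply, if_neg (by omega : k ≠ (i : ℕ)), h2]

lemma tail_update {n a k : ℕ} (b : ℕ → ℤ) (z : ℤ) (hk : k ≤ a) :
    tail n a (Function.update b k z) = tail n a b := by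
  apply Finset.sum_congr rfl
  intro i hi
  rw [Finset.mem_Ico] at hi
  rw [Function.update_of_ne (by omega)]

lemma gval_update {n a k : ℕ} (b : ℕ → ℤ) (z : ℤ) (hk : k ≤ a) :
    gval n a (Function.update b k z) = gval n a b := by
  rw [gval, gval, tail_update b z hk]

lemma ev_update {n a k : ℕ} (b : ℕ → ℤ) (z : ℤ) (hk : k + 2 ≤ a) :
    ev n a (Function.update b k z) ↔ ev n a b := by
  rw [ev, ev, gval_update b z (by omega), Function.update_of_ne (by omega),
    Function.update_of_ne (by omega)]

lemma gval_mem {n a : ℕ} (b : ℕ → ℤ) : gval n a b = 0 ∨ gval n a b = -1 := by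
  rw [gval]; split_ifs <;> simp

lemma filter_congr_any {α : Type*} {p q : α → Prop} {_ : DecidablePred p} {_ : DecidablePred q}
    {s : Finset α} (h : ∀ x ∈ s, p x ↔ q x) : s.filter p = s.filter q :=
  Finset.filter_congr h

/-- The master bijection step. -/
lemma step_count (n : ℕ) (S K : Finset ℕ) (w : ℕ → ℤ) (a : ℕ) (g : (ℕ → ℤ) → ℤ)
    (R : (ℕ → ℤ) → Prop)
    (han : a < n) (haS : a ∉ S) (haK : a ∉ K) (hKn : ∀ k ∈ K, k < n)
    (hwa : w a = 0) (hwK : ∀ k ∈ K, w k = 0)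
    (hg0 : ∀ b, g b = 0 ∨ g b = -1)
    (hg : ∀ b z, g (Function.update b a z) = g b)
    (hR : ∀ b z, R (Function.update b a z) ↔ R b) :
    ((pbox n S w).filter (fun v => R (ext n v) ∧ (∀ k ∈ K, ext n v k = 0)
        ∧ ext n v a = g (ext n v))).card
      = ((pbox n (insert a (S ∪ K)) w).filter (fun v => R (ext n v))).card := by
  set A : Fin n := ⟨a, han⟩ with hA
  apply Finset.card_bij' (i := fun v _ => Function.update v A 0)
    (j := fun w' _ => Function.update w' A (g (ext n w')))
  · -- hi : maps into target
    intro v hv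
    rw [Finset.mem_filter] at hv ⊢
    obtain ⟨hvb, hvR, hvK, hva⟩ := hv
    constructor
    · rw [mem_pbox]
      intro i
      constructor
      · intro hiS
        by_cases hia : i = A
        · subst hia
          rw [Function.update_self]
          have : (A : ℕ) = a := rfl
          rw [this, hwa]
        · rw [Function.update_of_ne hia]
          rw [Finset.mem_insert] at hiS
          rcases hiS with h | h
          · exact absurd (Fin.ext h : i = A) hia
          · rw [Finset.mem_union] at h
            rcases h with h | h
            · exact (mem_pbox.mp hvb i).1 h
            · rw [← ext_val v i, hvK _ h, hwK _ h]
      · intro hiS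
        by_cases hia : i = A
        · subst hia; rw [Function.update_self]; norm_num
        · rw [Function.update_of_ne hia]
          have : (i : ℕ) ∉ S := fun hc =>
            hiS (Finset.mem_insert.mpr (Or.inr (Finset.mem_union_left _ hc)))
          exact (mem_pbox.mp hvb i).2 this
    · rw [ext_update]
      exact (hR _ _).mpr hvR
  · -- hj : maps back
    intro w' hw'
    rw [Finset.mem_filter] at hw' ⊢
    obtain ⟨hwb, hwR⟩ := hw'
    have hwA : w' A = 0 := by
      have := (mem_pbox.mp hwb A).1 (Finset.mem_insert_self _ _)
      rw [this, hwa]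
    refine ⟨?_, ?_, ?_, ?_⟩
    · rw [mem_pbox]
      intro i
      constructor
      · intro hiS
        have hia : i ≠ A := fun hc => haS (by rw [hc] at hiS; exact hiS)
        rw [Function.update_of_ne hia]
        exact (mem_pbox.mp hwb i).1
          (Finset.mem_insert.mpr (Or.inr (Finset.mem_union_left _ hiS)))
      · intro hiS
        by_cases hia : i = A
        · subst hia; rw [Function.update_self]
          rcases hg0 (ext n w') with h | h <;> rw [h] <;> norm_num
        · rw [Function.update_of_ne hia]
          by_cases hiK : (i : ℕ) ∈ K
          · rw [(mem_pbox.mp hwb i).1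
              (Finset.mem_insert.mpr (Or.inr (Finset.mem_union_right _ hiK))), hwK _ hiK]
            norm_num
          · have : (i : ℕ) ∉ insert a (S ∪ K) := by
              rw [Finset.mem_insert, Finset.mem_union]
              push_neg
              exact ⟨fun hc => hia (Fin.ext hc), hiS, hiK⟩
            exact (mem_pbox.mp hwb i).2 this
    · rw [ext_update]
      exact (hR _ _).mpr hwR
    · intro k hk
      have hkn : k < n := hKn k hk
      have hne : (⟨k, hkn⟩ : Fin n) ≠ A := by
        intro hc
        apply haK
        have hval : k = a := by simpa using congrArg Fin.val hc
        rw [← hval]; exact hk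
      have hmem : ((⟨k, hkn⟩ : Fin n) : ℕ) ∈ insert a (S ∪ K) := by
        simp only [Fin.val_mk]
        exact Finset.mem_insert.mpr (Or.inr (Finset.mem_union_right _ hk))
      rw [ext_lt _ hkn, Function.update_of_ne hne, (mem_pbox.mp hwb ⟨k, hkn⟩).1 hmem]
      exact hwK k hk
    · rw [ext_update, Function.update_self, hg]
  · -- left inverse
    intro v hv
    rw [Finset.mem_filter] at hv
    obtain ⟨hvb, hvR, hvK, hva⟩ := hv
    rw [ext_update, hg, Function.update_idem]
    rw [← hva, ext_lt v han]
    exact Function.update_eq_self A v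
  · -- right inverse
    intro w' hw'
    rw [Finset.mem_filter] at hw'
    have hwA : w' A = 0 := by
      have := (mem_pbox.mp hw'.1 A).1 (Finset.mem_insert_self _ _)
      rw [this, hwa]
    rw [Function.update_idem, ← hwA]
    exact Function.update_eq_self A w'


lemma adj_char {n a : ℕ} {b : ℕ → ℤ} (hb : InBox n b) (ha2 : 2 ≤ a) (han : a < n) :
    (ev n a b ∧ ev n (a - 1) b) ↔ (b (a - 2) = 0 ∧ b (a - 1) = 0 ∧ b a = gval n a b) := by
  have hts := tail_succ b (by omega) han
  have htl := tail_bound hb han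
  rw [abs_le] at htl
  have ha11 : a - 1 - 1 = a - 2 := by omega
  constructor
  · rintro ⟨⟨h1, h2⟩, ⟨h3, h4⟩⟩
    exact ⟨by rw [← ha11]; exact h3, h1, h2⟩
  · rintro ⟨h1, h2, h3⟩
    have hneg : tail n (a - 1) b < 0 := by
      rw [hts, h3, gval]
      split_ifs with ht
      · simpa using ht
      · push_neg at ht
        nlinarith [htl.2]
    refine ⟨⟨h2, h3⟩, ?_, ?_⟩
    · rw [ha11]; exact h1
    · rw [h2, gval, if_pos hneg]

lemma count_one {n j a : ℕ} (hja : j + 2 ≤ a) (han : a < n) :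
    ((Tj n j).filter (fun v => ev n a (ext n v))).card * 9 = 3 ^ (n - (j + 1)) := by
  have key := step_count n (Finset.range (j + 1)) {a - 1} (wj j) a (gval n a)
    (fun _ => True) han
    (by simp only [Finset.mem_range]; omega)
    (by simp only [Finset.mem_singleton]; omega)
    (by intro k hk; simp only [Finset.mem_singleton] at hk; omega)
    (by simp only [wj]; rw [if_neg (by omega)])
    (by intro k hk; simp only [Finset.mem_singleton] at hk; subst hk
        simp only [wj]; rw [if_neg (by omega)])
    (fun b => gval_mem b) (fun b z => gval_update b z le_rfl) (fun b z => Iff.rfl)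
  simp only [true_and, Finset.filter_true] at key
  have hfilter : (Tj n j).filter (fun v => ev n a (ext n v))
      = (pbox n (Finset.range (j + 1)) (wj j)).filter
          (fun v => (∀ k ∈ ({a - 1} : Finset ℕ), ext n v k = 0)
            ∧ ext n v a = gval n a (ext n v)) := by
    rw [Tj]
    apply filter_congr_any
    intro v _
    simp only [ev, Finset.mem_singleton]
    constructor
    · rintro ⟨h1, h2⟩; exact ⟨fun k hk => by subst hk; exact h1, h2⟩
    · rintro ⟨h1, h2⟩; exact ⟨h1 _ rfl, h2⟩
  rw [hfilter]
  refine Eq.trans (congrArg (· * 9) (?_ : _ = (pbox n (insert a (Finset.range (j + 1) ∪ {a - 1})) (wj j)).card)) ?_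
  · convert key using 2
    ext v
    simp only [Finset.mem_filter]
  rw [card_pbox n (wj j) (by
    intro s hs
    simp only [Finset.mem_insert, Finset.mem_union, Finset.mem_range,
      Finset.mem_singleton] at hs
    omega)]
  have hcard : (insert a (Finset.range (j + 1) ∪ {a - 1})).card = j + 3 := by
    rw [Finset.card_insert_of_notMem (by
      simp only [Finset.mem_union, Finset.mem_range, Finset.mem_singleton]
      omega)]
    rw [Finset.card_union_of_disjoint (by
      simp only [Finset.disjoint_singleton_right, Finset.mem_range]
      omega)]
    simp
  rw [hcard, show (9 : ℕ) = 3 ^ 2 from rfl, ← pow_add]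
  congr 1
  omega

lemma count_adj {n j a : ℕ} (hja : j + 3 ≤ a) (han : a < n) :
    ((Tj n j).filter (fun v => ev n a (ext n v) ∧ ev n (a - 1) (ext n v))).card * 27
      = 3 ^ (n - (j + 1)) := by
  have key := step_count n (Finset.range (j + 1)) {a - 2, a - 1} (wj j) a (gval n a)
    (fun _ => True) han
    (by simp only [Finset.mem_range]; omega)
    (by simp only [Finset.mem_insert, Finset.mem_singleton]; omega)
    (by intro k hk; simp only [Finset.mem_insert, Finset.mem_singleton] at hk; omega)
    (by simp only [wj]; rw [if_neg (by omega)])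
    (by intro k hk; simp only [Finset.mem_insert, Finset.mem_singleton] at hk
        simp only [wj]; rw [if_neg (by omega)])
    (fun b => gval_mem b) (fun b z => gval_update b z le_rfl) (fun b z => Iff.rfl)
  simp only [true_and, Finset.filter_true] at key
  have hfilter : (Tj n j).filter (fun v => ev n a (ext n v) ∧ ev n (a - 1) (ext n v))
      = (pbox n (Finset.range (j + 1)) (wj j)).filter
          (fun v => (∀ k ∈ ({a - 2, a - 1} : Finset ℕ), ext n v k = 0)
            ∧ ext n v a = gval n a (ext n v)) := by
    rw [Tj]
    apply filter_congr_any
    intro v hv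
    have hbox : InBox n (ext n v) := Tj_inBox hv
    rw [adj_char hbox (by omega) han]
    simp only [Finset.mem_insert, Finset.mem_singleton]
    constructor
    · rintro ⟨h1, h2, h3⟩
      exact ⟨fun k hk => by rcases hk with h | h <;> subst h <;> assumption, h3⟩
    · rintro ⟨h1, h2⟩
      exact ⟨h1 _ (Or.inl rfl), h1 _ (Or.inr rfl), h2⟩
  rw [hfilter]
  refine Eq.trans (congrArg (· * 27) (?_ : _ = (pbox n (insert a (Finset.range (j + 1) ∪ {a - 2, a - 1})) (wj j)).card)) ?_
  · convert key using 2
    ext v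
    simp only [Finset.mem_filter]
  rw [card_pbox n (wj j) (by
    intro s hs
    simp only [Finset.mem_insert, Finset.mem_union, Finset.mem_range,
      Finset.mem_singleton] at hs
    omega)]
  have hcard : (insert a (Finset.range (j + 1) ∪ {a - 2, a - 1})).card = j + 4 := by
    rw [Finset.card_insert_of_notMem (by
      simp only [Finset.mem_union, Finset.mem_range, Finset.mem_insert,
        Finset.mem_singleton]
      omega)]
    rw [Finset.card_union_of_disjoint (by
      rw [Finset.disjoint_left]
      intro x hx
      simp only [Finset.mem_range] at hx
      simp only [Finset.mem_insert, Finset.mem_singleton]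
      omega)]
    rw [Finset.card_range, Finset.card_insert_of_notMem (by
      simp only [Finset.mem_singleton]; omega)]
    simp
  rw [hcard, show (27 : ℕ) = 3 ^ 3 from rfl, ← pow_add]
  congr 1
  omega

lemma count_far {n j a a' : ℕ} (hja : j + 2 ≤ a') (haa : a' + 2 ≤ a) (han : a < n) :
    ((Tj n j).filter (fun v => ev n a (ext n v) ∧ ev n a' (ext n v))).card * 81
      = 3 ^ (n - (j + 1)) := by
  have key1 := step_count n (Finset.range (j + 1)) {a' - 1} (wj j) a' (gval n a')
    (ev n a) (by omega)
    (by simp only [Finset.mem_range]; omega)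
    (by simp only [Finset.mem_singleton]; omega)
    (by intro k hk; simp only [Finset.mem_singleton] at hk; omega)
    (by simp only [wj]; rw [if_neg (by omega)])
    (by intro k hk; simp only [Finset.mem_singleton] at hk; subst hk
        simp only [wj]; rw [if_neg (by omega)])
    (fun b => gval_mem b) (fun b z => gval_update b z le_rfl)
    (fun b z => ev_update b z (by omega))
  set S1 := insert a' (Finset.range (j + 1) ∪ {a' - 1}) with hS1
  have key2 := step_count n S1 {a - 1} (wj j) a (gval n a)
    (fun _ => True) han
    (by simp only [hS1, Finset.mem_insert, Finset.mem_union, Finset.mem_range,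
          Finset.mem_singleton]; omega)
    (by simp only [Finset.mem_singleton]; omega)
    (by intro k hk; simp only [Finset.mem_singleton] at hk; omega)
    (by simp only [wj]; rw [if_neg (by omega)])
    (by intro k hk; simp only [Finset.mem_singleton] at hk; subst hk
        simp only [wj]; rw [if_neg (by omega)])
    (fun b => gval_mem b) (fun b z => gval_update b z le_rfl) (fun b z => Iff.rfl)
  simp only [true_and, Finset.filter_true] at key2
  have hfilter1 : (Tj n j).filter (fun v => ev n a (ext n v) ∧ ev n a' (ext n v))
      = (pbox n (Finset.range (j + 1)) (wj j)).filter
          (fun v => ev n a (ext n v) ∧ (∀ k ∈ ({a' - 1} : Finset ℕ), ext n v k = 0)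
            ∧ ext n v a' = gval n a' (ext n v)) := by
    rw [Tj]
    apply filter_congr_any
    intro v _
    simp only [ev, Finset.mem_singleton]
    constructor
    · rintro ⟨h0, h1, h2⟩; exact ⟨h0, fun k hk => by subst hk; exact h1, h2⟩
    · rintro ⟨h0, h1, h2⟩; exact ⟨h0, h1 _ rfl, h2⟩
  have hfilter2 : (pbox n S1 (wj j)).filter (fun v => ev n a (ext n v))
      = (pbox n S1 (wj j)).filter
          (fun v => (∀ k ∈ ({a - 1} : Finset ℕ), ext n v k = 0)
            ∧ ext n v a = gval n a (ext n v)) := by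
    apply filter_congr_any
    intro v _
    simp only [ev, Finset.mem_singleton]
    constructor
    · rintro ⟨h1, h2⟩; exact ⟨fun k hk => by subst hk; exact h1, h2⟩
    · rintro ⟨h1, h2⟩; exact ⟨h1 _ rfl, h2⟩
  rw [hfilter1]
  refine Eq.trans (congrArg (· * 81) (?_ : _ = ((pbox n S1 (wj j)).filter (fun v => ev n a (ext n v))).card)) ?_
  · convert key1 using 2
    ext v
    simp only [Finset.mem_filter]
  rw [hfilter2]
  refine Eq.trans (congrArg (· * 81) (?_ : _ = (pbox n (insert a (S1 ∪ {a - 1})) (wj j)).card)) ?_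
  · convert key2 using 2
    ext v
    simp only [Finset.mem_filter]
  rw [card_pbox n (wj j) (by
    intro s hs
    simp only [hS1, Finset.mem_insert, Finset.mem_union, Finset.mem_range,
      Finset.mem_singleton] at hs
    omega)]
  have hcard : (insert a (S1 ∪ {a - 1})).card = j + 5 := by
    rw [Finset.card_insert_of_notMem (by
      simp only [hS1, Finset.mem_union, Finset.mem_insert, Finset.mem_range,
        Finset.mem_singleton]
      omega)]
    rw [Finset.card_union_of_disjoint (by
      rw [Finset.disjoint_right]
      intro x hx
      simp only [Finset.mem_singleton] at hx
      simp only [hS1, Finset.mem_insert, Finset.mem_union, Finset.mem_range,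
        Finset.mem_singleton]
      omega)]
    rw [hS1, Finset.card_insert_of_notMem (by
      simp only [Finset.mem_union, Finset.mem_range, Finset.mem_singleton]
      omega)]
    rw [Finset.card_union_of_disjoint (by
      simp only [Finset.disjoint_singleton_right, Finset.mem_range]
      omega)]
    simp
  rw [hcard, show (81 : ℕ) = 3 ^ 4 from rfl, ← pow_add]
  congr 1
  omega

def cnt (n j : ℕ) (v : Fin n → ℤ) : ℕ :=
  ((Finset.Ico (j + 2) n).filter (fun a => ev n a (ext n v))).card

lemma sum_cnt {n j : ℕ} :
    9 * ∑ v ∈ Tj n j, cnt n j v = (n - (j + 2)) * 3 ^ (n - (j + 1)) := by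
  have swap : ∑ v ∈ Tj n j, cnt n j v
      = ∑ a ∈ Finset.Ico (j + 2) n, ((Tj n j).filter (fun v => ev n a (ext n v))).card := by
    simp only [cnt, Finset.card_filter]
    rw [Finset.sum_comm]
  have hterm : ∀ a ∈ Finset.Ico (j + 2) n,
      9 * ((Tj n j).filter (fun v => ev n a (ext n v))).card = 3 ^ (n - (j + 1)) := by
    intro a ha
    rw [Finset.mem_Ico] at ha
    rw [mul_comm]
    exact count_one ha.1 ha.2
  rw [swap, Finset.mul_sum, Finset.sum_congr rfl hterm, Finset.sum_const, Nat.card_Ico,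
    smul_eq_mul]

lemma pair_card_bound {n j : ℕ} (a a' : ℕ) (ha : a ∈ Finset.Ico (j + 2) n)
    (ha' : a' ∈ Finset.Ico (j + 2) n) :
    ((Tj n j).filter (fun v => ev n a (ext n v) ∧ ev n a' (ext n v))).card * 81
      ≤ (1 + (if a = a' then 8 else 0) + (if a = a' + 1 ∨ a' = a + 1 then 2 else 0))
          * 3 ^ (n - (j + 1)) := by
  rw [Finset.mem_Ico] at ha ha'
  rcases eq_or_ne a a' with heq | hne
  · subst heq
    rw [if_pos rfl, if_neg (by omega)]
    have h1 : ((Tj n j).filter (fun v => ev n a (ext n v) ∧ ev n a (ext n v))).card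
        = ((Tj n j).filter (fun v => ev n a (ext n v))).card := by
      congr 1
      apply Finset.filter_congr
      intro v _
      simp
    rw [h1]
    have := count_one ha.1 ha.2
    calc ((Tj n j).filter (fun v => ev n a (ext n v))).card * 81
        = (((Tj n j).filter (fun v => ev n a (ext n v))).card * 9) * 9 := by ring
      _ = 3 ^ (n - (j + 1)) * 9 := by rw [this]
      _ = (1 + 8 + 0) * 3 ^ (n - (j + 1)) := by ring
      _ ≤ (1 + 8 + 0) * 3 ^ (n - (j + 1)) := le_refl _
  · rw [if_neg hne]
    rcases eq_or_ne a (a' + 1) with hadj | hne2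
    · subst hadj
      rw [if_pos (Or.inl rfl)]
      have h1 : ((Tj n j).filter
            (fun v => ev n (a' + 1) (ext n v) ∧ ev n a' (ext n v))).card
          = ((Tj n j).filter
            (fun v => ev n (a' + 1) (ext n v) ∧ ev n (a' + 1 - 1) (ext n v))).card := by
        simp only [Nat.add_sub_cancel]
      have := count_adj (n := n) (j := j) (a := a' + 1) (by omega) (by omega)
      calc ((Tj n j).filter (fun v => ev n (a'+1) (ext n v) ∧ ev n a' (ext n v))).card * 81
          = (((Tj n j).filter
              (fun v => ev n (a'+1) (ext n v) ∧ ev n (a'+1-1) (ext n v))).card * 27) * 3 := by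
            rw [h1]; ring
        _ = 3 ^ (n - (j + 1)) * 3 := by rw [this]
        _ = (1 + 0 + 2) * 3 ^ (n - (j + 1)) := by ring
        _ ≤ (1 + 0 + 2) * 3 ^ (n - (j + 1)) := le_refl _
    · rcases eq_or_ne a' (a + 1) with hadj' | hne3
      · subst hadj'
        rw [if_pos (Or.inr rfl)]
        have h1 : ((Tj n j).filter
              (fun v => ev n a (ext n v) ∧ ev n (a + 1) (ext n v))).card
            = ((Tj n j).filter
              (fun v => ev n (a + 1) (ext n v) ∧ ev n (a + 1 - 1) (ext n v))).card := by
          congr 1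
          apply Finset.filter_congr
          intro v _
          simp only [Nat.add_sub_cancel]
          exact and_comm
        have := count_adj (n := n) (j := j) (a := a + 1) (by omega) (by omega)
        calc ((Tj n j).filter (fun v => ev n a (ext n v) ∧ ev n (a+1) (ext n v))).card * 81
            = (((Tj n j).filter
                (fun v => ev n (a+1) (ext n v) ∧ ev n (a+1-1) (ext n v))).card * 27) * 3 := by
              rw [h1]; ring
          _ = 3 ^ (n - (j + 1)) * 3 := by rw [this]
          _ = (1 + 0 + 2) * 3 ^ (n - (j + 1)) := by ring
          _ ≤ (1 + 0 + 2) * 3 ^ (n - (j + 1)) := le_refl _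
      · rw [if_neg (by tauto)]
        rcases Nat.lt_or_ge a a' with hlt | hge
        · -- a' ≥ a + 2
          have h1 : ((Tj n j).filter
                (fun v => ev n a (ext n v) ∧ ev n a' (ext n v))).card
              = ((Tj n j).filter
                (fun v => ev n a' (ext n v) ∧ ev n a (ext n v))).card := by
            congr 1
            apply Finset.filter_congr
            intro v _
            exact and_comm
          rw [h1, count_far ha.1 (by omega) ha'.2]
          simp
        · rw [count_far ha'.1 (by omega) ha.2]
          simp

lemma sum_cnt_sq {n j : ℕ} :
    81 * ∑ v ∈ Tj n j, (cnt n j v) ^ 2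
      ≤ ((n - (j + 2)) ^ 2 + 12 * (n - (j + 2))) * 3 ^ (n - (j + 1)) := by
  set I := Finset.Ico (j + 2) n with hI
  have expand : ∀ v : Fin n → ℤ, (cnt n j v) ^ 2
      = ∑ p ∈ I ×ˢ I, if ev n p.1 (ext n v) ∧ ev n p.2 (ext n v) then 1 else 0 := by
    intro v
    rw [cnt, sq, Finset.card_filter, ← hI, Finset.sum_mul_sum, ← Finset.sum_product']
    apply Finset.sum_congr rfl
    intro p hp
    by_cases h1 : ev n p.1 (ext n v) <;> by_cases h2 : ev n p.2 (ext n v) <;>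
      simp [h1, h2]
  have swap : ∑ v ∈ Tj n j, (cnt n j v) ^ 2
      = ∑ p ∈ I ×ˢ I, ((Tj n j).filter
          (fun v => ev n p.1 (ext n v) ∧ ev n p.2 (ext n v))).card := by
    rw [Finset.sum_congr rfl (fun v _ => expand v), Finset.sum_comm]
    apply Finset.sum_congr rfl
    intro p _
    rw [Finset.card_filter]
  rw [swap, Finset.mul_sum]
  have step : ∀ p ∈ I ×ˢ I, 81 * ((Tj n j).filter
        (fun v => ev n p.1 (ext n v) ∧ ev n p.2 (ext n v))).card
      ≤ (1 + (if p.1 = p.2 then 8 else 0) + (if p.1 = p.2 + 1 ∨ p.2 = p.1 + 1 then 2 else 0))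
          * 3 ^ (n - (j + 1)) := by
    intro p hp
    rw [Finset.mem_product] at hp
    rw [mul_comm]
    exact pair_card_bound p.1 p.2 hp.1 hp.2
  calc ∑ p ∈ I ×ˢ I, 81 * ((Tj n j).filter
        (fun v => ev n p.1 (ext n v) ∧ ev n p.2 (ext n v))).card
      ≤ ∑ p ∈ I ×ˢ I, (1 + (if p.1 = p.2 then 8 else 0)
          + (if p.1 = p.2 + 1 ∨ p.2 = p.1 + 1 then 2 else 0)) * 3 ^ (n - (j + 1)) :=
        Finset.sum_le_sum step
    _ = (∑ p ∈ I ×ˢ I, (1 + (if p.1 = p.2 then 8 else 0)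
          + (if p.1 = p.2 + 1 ∨ p.2 = p.1 + 1 then 2 else 0))) * 3 ^ (n - (j + 1)) := by
        rw [Finset.sum_mul]
    _ ≤ ((n - (j + 2)) ^ 2 + 12 * (n - (j + 2))) * 3 ^ (n - (j + 1)) := by
        apply Nat.mul_le_mul_right
        have hm : I.card = n - (j + 2) := Nat.card_Ico _ _
        rw [Finset.sum_add_distrib, Finset.sum_add_distrib, Finset.sum_const,
          Finset.card_product, hm, smul_eq_mul, mul_one]
        have hdiag : (∑ p ∈ I ×ˢ I, if p.1 = p.2 then 8 else 0) ≤ 8 * (n - (j + 2)) := by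
          rw [← Finset.sum_filter, Finset.sum_const, smul_eq_mul]
          have hsub : (I ×ˢ I).filter (fun p => p.1 = p.2)
              ⊆ I.image (fun a => (a, a)) := by
            intro p hp
            rw [Finset.mem_filter, Finset.mem_product] at hp
            rw [Finset.mem_image]
            refine ⟨p.1, hp.1.1, ?_⟩
            have := hp.2
            ext
            · rfl
            · exact this
          have h2 : ((I ×ˢ I).filter (fun p => p.1 = p.2)).card ≤ n - (j + 2) := by
            calc ((I ×ˢ I).filter (fun p => p.1 = p.2)).card
                ≤ (I.image (fun a => (a, a))).card := Finset.card_le_card hsub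
              _ ≤ I.card := Finset.card_image_le
              _ = n - (j + 2) := hm
          omega
        have hadj : (∑ p ∈ I ×ˢ I, if p.1 = p.2 + 1 ∨ p.2 = p.1 + 1 then 2 else 0)
            ≤ 4 * (n - (j + 2)) := by
          rw [← Finset.sum_filter, Finset.sum_const, smul_eq_mul]
          have hsub : (I ×ˢ I).filter (fun p => p.1 = p.2 + 1 ∨ p.2 = p.1 + 1)
              ⊆ I.image (fun a => (a + 1, a)) ∪ I.image (fun a => (a, a + 1)) := by
            intro p hp
            rw [Finset.mem_filter, Finset.mem_product] at hp
            rw [Finset.mem_union, Finset.mem_image, Finset.mem_image]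
            rcases hp.2 with h | h
            · refine Or.inl ⟨p.2, hp.1.2, ?_⟩
              ext
              · exact h.symm
              · rfl
            · refine Or.inr ⟨p.1, hp.1.1, ?_⟩
              ext
              · rfl
              · exact h.symm
          have h2 : ((I ×ˢ I).filter (fun p => p.1 = p.2 + 1 ∨ p.2 = p.1 + 1)).card
              ≤ 2 * (n - (j + 2)) := by
            calc ((I ×ˢ I).filter (fun p => p.1 = p.2 + 1 ∨ p.2 = p.1 + 1)).card
                ≤ (I.image (fun a => (a + 1, a)) ∪ I.image (fun a => (a, a + 1))).card :=
                  Finset.card_le_card hsub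
              _ ≤ (I.image (fun a => (a + 1, a))).card
                    + (I.image (fun a => (a, a + 1))).card := Finset.card_union_le _ _
              _ ≤ I.card + I.card := Nat.add_le_add Finset.card_image_le Finset.card_image_le
              _ = 2 * (n - (j + 2)) := by rw [hm]; ring
          omega
        have hsq : (n - (j + 2)) ^ 2 = (n - (j + 2)) * (n - (j + 2)) := sq (n - (j + 2)) ▸ rfl
        nlinarith [hdiag, hadj]

lemma sum_dev_sq {n j : ℕ} (hj : j < n) :
    ∑ v ∈ Tj n j, (9 * (cnt n j v : ℤ) - ((n - (j + 2) : ℕ) : ℤ)) ^ 2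
      ≤ 12 * ((n - (j + 2) : ℕ) : ℤ) * 3 ^ (n - (j + 1)) := by
  set m : ℤ := ((n - (j + 2) : ℕ) : ℤ) with hm
  set B : ℤ := (3 : ℤ) ^ (n - (j + 1)) with hB
  set X : ℤ := ∑ v ∈ Tj n j, (cnt n j v : ℤ) with hX
  set Y : ℤ := ∑ v ∈ Tj n j, (cnt n j v : ℤ) ^ 2 with hY
  have h1 : 9 * X = m * B := by
    have := sum_cnt (n := n) (j := j)
    rw [hX, hm, hB]
    push_cast
    exact_mod_cast this
  have h2 : 81 * Y ≤ (m ^ 2 + 12 * m) * B := by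
    have := sum_cnt_sq (n := n) (j := j)
    rw [hY, hm, hB]
    push_cast
    exact_mod_cast this
  have h3 : ((Tj n j).card : ℤ) = B := by
    rw [hB]; exact_mod_cast card_Tj hj
  have key : ∑ v ∈ Tj n j, (9 * (cnt n j v : ℤ) - m) ^ 2
      = 81 * Y - 18 * m * X + ((Tj n j).card : ℤ) * m ^ 2 := by
    rw [Finset.sum_congr rfl (fun v _ => show (9 * (cnt n j v : ℤ) - m) ^ 2
        = 81 * (cnt n j v : ℤ) ^ 2 - 18 * m * (cnt n j v : ℤ) + m ^ 2 by ring),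
      Finset.sum_add_distrib, Finset.sum_sub_distrib, hY, hX, ← Finset.mul_sum,
      ← Finset.mul_sum, Finset.sum_const, nsmul_eq_mul]
  rw [key, h3]
  have h4 : 18 * m * X = 2 * m ^ 2 * B := by linear_combination 2 * m * h1
  calc 81 * Y - 18 * m * X + B * m ^ 2
      ≤ (m ^ 2 + 12 * m) * B - 18 * m * X + B * m ^ 2 := by linarith [h2]
    _ = (m ^ 2 + 12 * m) * B - 2 * m ^ 2 * B + B * m ^ 2 := by rw [h4]
    _ = 12 * m * B := by ring

lemma count_eq {n j : ℕ} {v : Fin n → ℤ} (hj : j < n) (hv : v ∈ Tj n j) :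
    (Finset.Ico 1 n).filter (fun a =>
        btilde n (ext n v) (a - 1) = 1 ∧ btilde n (ext n v) a = 1
          ∧ ext n v (a - 1) ≠ 1 ∧ ext n v a ≠ 1)
      = (Finset.Ico (j + 2) n).filter (fun a => ev n a (ext n v)) := by
  have hb : InBox n (ext n v) := Tj_inBox hv
  have hS : (0 : ℤ) ≤ cdgS n (ext n v) := by
    have := cdgS_pos hb (Tj_firstOne hj hv)
    linarith
  ext a
  simp only [Finset.mem_filter, Finset.mem_Ico]
  constructor
  · rintro ⟨⟨ha1, han⟩, hfour⟩
    have hev := (pair_iff hb hS ha1 han).mp hfour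
    have hj2 : j + 2 ≤ a := by
      by_contra hc
      exact not_ev_le hb hj (Tj_first hj hv).1 (Tj_first hj hv).2 ha1 han (by omega) hev
    exact ⟨⟨hj2, han⟩, hev⟩
  · rintro ⟨⟨hj2, han⟩, hev⟩
    exact ⟨⟨by omega, han⟩, (pair_iff hb hS (by omega) han).mpr hev⟩

def GoodSet (n : ℕ) (ε : ℝ) : Set (ℕ → ℤ) :=
  {ω : ℕ → ℤ |
    (1 / 9 - ε) * n <
      (((Finset.Ico 1 n).filter (fun a =>
        btilde n ω (a - 1) = 1 ∧ btilde n ω a = 1 ∧ ω (a - 1) ≠ 1 ∧ ω a ≠ 1)).card : ℝ) ∧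
    (((Finset.Ico 1 n).filter (fun a =>
        btilde n ω (a - 1) = 1 ∧ btilde n ω a = 1 ∧ ω (a - 1) ≠ 1 ∧ ω a ≠ 1)).card : ℝ) <
      (1 / 9 + ε) * n}

def Fset (n : ℕ) : Finset (Fin n → ℤ) := (box n).filter (fun v => ext n v ∈ firstOne n)

def Bset (n : ℕ) (ε : ℝ) : Finset (Fin n → ℤ) :=
  (box n).filter (fun v => ext n v ∈ firstOne n ∩ (GoodSet n ε)ᶜ)

lemma card_Fset (n : ℕ) : (Fset n).card = ∑ j ∈ Finset.range n, 3 ^ (n - (j + 1)) := by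
  rw [Fset, filterF_eq, Finset.card_biUnion (fun i hi j hj hij =>
    Tj_pairwiseDisjoint n (by simpa using Finset.mem_range.mp hi)
      (by simpa using Finset.mem_range.mp hj) hij)]
  exact Finset.sum_congr rfl fun j hj => card_Tj (Finset.mem_range.mp hj)

lemma Bset_eq (n : ℕ) (ε : ℝ) :
    Bset n ε = (Finset.range n).biUnion
      (fun j => (Tj n j).filter (fun v => ext n v ∉ GoodSet n ε)) := by
  have h1 : Bset n ε = ((box n).filter (fun v => ext n v ∈ firstOne n)).filter
      (fun v => ext n v ∉ GoodSet n ε) := by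
    rw [Bset, Finset.filter_filter]
    apply Finset.filter_congr
    intro v _
    simp [Set.mem_inter_iff]
  rw [h1, filterF_eq, Finset.filter_biUnion]

lemma card_Bset (n : ℕ) (ε : ℝ) :
    (Bset n ε).card = ∑ j ∈ Finset.range n,
      ((Tj n j).filter (fun v => ext n v ∉ GoodSet n ε)).card := by
  rw [Bset_eq, Finset.card_biUnion]
  intro i hi j hj hij
  exact Finset.disjoint_filter_filter
    (Tj_pairwiseDisjoint n (by simpa using Finset.mem_range.mp hi)
      (by simpa using Finset.mem_range.mp hj) hij)

lemma badj_bound {ε : ℝ} (hε : 0 < ε) (hε2 : ε ≤ 1 / 2) {n j : ℕ} (hjn : j < n)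
    (hn2 : 2 ≤ ε * n) (hjt : (j : ℝ) < ε * n) :
    (((Tj n j).filter (fun v => ext n v ∉ GoodSet n ε)).card : ℝ)
      ≤ 12 / (49 * ε ^ 2 * n) * 3 ^ (n - (j + 1)) := by
  have hn4 : (4 : ℝ) ≤ n := by nlinarith
  have hn4' : 4 ≤ n := by exact_mod_cast hn4
  have hn0 : (0 : ℝ) < n := by linarith
  have h2j : 2 * (j : ℝ) < n := by nlinarith
  have h2j' : 2 * j < n := by exact_mod_cast h2j
  have hjn2 : j + 2 ≤ n := by omega
  have hm : (((n - (j + 2) : ℕ)) : ℝ) = (n : ℝ) - j - 2 := by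
    push_cast [hjn2]
    ring
  have hεn0 : 0 ≤ 7 * ε * n := by positivity
  -- deviation bound for each bad element
  have hdev : ∀ v ∈ (Tj n j).filter (fun v => ext n v ∉ GoodSet n ε),
      (7 * ε * n) ^ 2 ≤ ((9 * (cnt n j v : ℤ) - ((n - (j + 2) : ℕ) : ℤ) : ℤ) : ℝ) ^ 2 := by
    intro v hv
    rw [Finset.mem_filter] at hv
    obtain ⟨hvT, hvb⟩ := hv
    have hcnt : ((Finset.Ico 1 n).filter (fun a =>
        btilde n (ext n v) (a - 1) = 1 ∧ btilde n (ext n v) a = 1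
          ∧ ext n v (a - 1) ≠ 1 ∧ ext n v a ≠ 1)).card = cnt n j v := by
      rw [count_eq hjn hvT]; rfl
    set N : ℕ := cnt n j v with hN
    have hx : ((9 * (cnt n j v : ℤ) - ((n - (j + 2) : ℕ) : ℤ) : ℤ) : ℝ)
        = 9 * (N : ℝ) - ((n : ℝ) - j - 2) := by
      push_cast [hjn2]
      ring
    rw [hx]
    simp only [GoodSet, Set.mem_setOf_eq, hcnt, not_and_or, not_lt] at hvb
    rcases hvb with hlo | hhi
    · have h7 : 7 * ε * n ≤ ((n : ℝ) - j - 2) - 9 * N := by nlinarith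
      calc (7 * ε * n) ^ 2 ≤ (((n : ℝ) - j - 2) - 9 * N) ^ 2 := by
            apply pow_le_pow_left₀ hεn0 h7
        _ = (9 * (N : ℝ) - ((n : ℝ) - j - 2)) ^ 2 := by ring
    · have h7 : 7 * ε * n ≤ 9 * (N : ℝ) - ((n : ℝ) - j - 2) := by nlinarith
      apply pow_le_pow_left₀ hεn0 h7
  -- Chebyshev
  set Bad := (Tj n j).filter (fun v => ext n v ∉ GoodSet n ε) with hBad
  have hcheb : (Bad.card : ℝ) * (7 * ε * n) ^ 2 ≤ 12 * n * 3 ^ (n - (j + 1)) := by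
    calc (Bad.card : ℝ) * (7 * ε * n) ^ 2
        ≤ ∑ v ∈ Bad, ((9 * (cnt n j v : ℤ) - ((n - (j + 2) : ℕ) : ℤ) : ℤ) : ℝ) ^ 2 := by
          rw [← nsmul_eq_mul]
          exact Finset.card_nsmul_le_sum Bad _ _ hdev
      _ ≤ ∑ v ∈ Tj n j, ((9 * (cnt n j v : ℤ) - ((n - (j + 2) : ℕ) : ℤ) : ℤ) : ℝ) ^ 2 :=
          Finset.sum_le_sum_of_subset_of_nonneg (Finset.filter_subset _ _)
            (fun v _ _ => sq_nonneg _)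
      _ = ((∑ v ∈ Tj n j, (9 * (cnt n j v : ℤ) - ((n - (j + 2) : ℕ) : ℤ)) ^ 2 : ℤ) : ℝ) := by
          push_cast
          rfl
      _ ≤ ((12 * ((n - (j + 2) : ℕ) : ℤ) * 3 ^ (n - (j + 1)) : ℤ) : ℝ) := by
          exact_mod_cast sum_dev_sq hjn
      _ ≤ 12 * n * 3 ^ (n - (j + 1)) := by
          push_cast
          have hmn : ((n : ℝ) - j - 2) ≤ n := by linarith
          rw [hm]
          have h3 : (0 : ℝ) < 3 ^ (n - (j + 1)) := by positivity
          nlinarith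
  have hpos : (0 : ℝ) < 49 * ε ^ 2 * n := by positivity
  rw [div_mul_eq_mul_div, le_div_iff₀ hpos]
  have h2' : ((Bad.card : ℝ) * (49 * ε ^ 2 * n)) * (n : ℝ)
      ≤ ((12 : ℝ) * 3 ^ (n - (j + 1))) * (n : ℝ) := by
    calc ((Bad.card : ℝ) * (49 * ε ^ 2 * n)) * (n : ℝ)
        = (Bad.card : ℝ) * (7 * ε * n) ^ 2 := by ring
      _ ≤ 12 * (n : ℝ) * 3 ^ (n - (j + 1)) := hcheb
      _ = ((12 : ℝ) * 3 ^ (n - (j + 1))) * (n : ℝ) := by ring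
  exact le_of_mul_le_mul_right h2' hn0

lemma geom3_le (m : ℕ) : ∑ k ∈ Finset.range m, (3 : ℝ) ^ k ≤ 3 ^ m := by
  induction m with
  | zero => simp
  | succ m ih =>
    rw [Finset.sum_range_succ, pow_succ]
    have h3 : (0 : ℝ) < 3 ^ m := by positivity
    nlinarith

lemma card_Bset_le {ε : ℝ} (hε : 0 < ε) (hε2 : ε ≤ 1 / 2) {n : ℕ} (hn2 : 2 ≤ ε * n) :
    ((Bset n ε).card : ℝ)
      ≤ (12 / (49 * ε ^ 2 * n) + 3 * (1 / 3 : ℝ) ^ (⌈ε * n⌉₊)) * ((Fset n).card : ℝ) := by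
  have hn4 : (4 : ℝ) ≤ n := by nlinarith
  have hn4' : 4 ≤ n := by exact_mod_cast hn4
  have hn0 : (0 : ℝ) < n := by linarith
  set t : ℕ := ⌈ε * n⌉₊ with ht
  have htn : t ≤ n := by
    rw [ht]
    apply Nat.ceil_le.mpr
    nlinarith
  set c1 : ℝ := 12 / (49 * ε ^ 2 * n) with hc1
  have hc10 : 0 ≤ c1 := by positivity
  have hcard := card_Bset n ε
  have hstep : ((Bset n ε).card : ℝ) ≤ ∑ j ∈ Finset.range n,
      (c1 * 3 ^ (n - (j + 1)) + (if t ≤ j then (3 : ℝ) ^ (n - (j + 1)) else 0)) := by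
    rw [hcard]
    push_cast
    apply Finset.sum_le_sum
    intro j hj
    rw [Finset.mem_range] at hj
    rcases Nat.lt_or_ge j t with hjt | hjt
    · rw [if_neg (by omega), add_zero]
      have hjr : (j : ℝ) < ε * n := by
        have h1 : (j : ℝ) ≤ (t : ℝ) - 1 := by
          have h0 : j + 1 ≤ t := hjt
          have h0' := (Nat.cast_le (α := ℝ)).mpr h0
          push_cast at h0'
          linarith
        have h2 : (t : ℝ) < ε * n + 1 := Nat.ceil_lt_add_one (by positivity)
        linarith
      exact badj_bound hε hε2 hj hn2 hjr
    · rw [if_pos hjt]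
      have h1 : (((Tj n j).filter (fun v => ext n v ∉ GoodSet n ε)).card : ℝ)
          ≤ (3 : ℝ) ^ (n - (j + 1)) := by
        have := Finset.card_filter_le (Tj n j) (fun v => ext n v ∉ GoodSet n ε)
        have h2 := card_Tj hj
        have : ((Tj n j).filter (fun v => ext n v ∉ GoodSet n ε)).card ≤ 3 ^ (n - (j+1)) := by
          omega
        exact_mod_cast this
      have h3 : (0 : ℝ) ≤ c1 * 3 ^ (n - (j + 1)) := by positivity
      linarith
  have hsplit : ∑ j ∈ Finset.range n,
      (c1 * 3 ^ (n - (j + 1)) + (if t ≤ j then (3 : ℝ) ^ (n - (j + 1)) else 0))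
      = c1 * (∑ j ∈ Finset.range n, (3 : ℝ) ^ (n - (j + 1)))
        + ∑ j ∈ Finset.range n, (if t ≤ j then (3 : ℝ) ^ (n - (j + 1)) else 0) := by
    rw [Finset.sum_add_distrib, Finset.mul_sum]
  have hF : ((Fset n).card : ℝ) = ∑ j ∈ Finset.range n, (3 : ℝ) ^ (n - (j + 1)) := by
    rw [card_Fset]
    push_cast
    rfl
  have hFge : (3 : ℝ) ^ (n - 1) ≤ ((Fset n).card : ℝ) := by
    rw [hF]
    have h0 : 0 ∈ Finset.range n := Finset.mem_range.mpr (by omega)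
    have := Finset.single_le_sum (f := fun j => (3 : ℝ) ^ (n - (j + 1)))
      (fun i _ => by positivity) h0
    simpa using this
  have htail : ∑ j ∈ Finset.range n, (if t ≤ j then (3 : ℝ) ^ (n - (j + 1)) else 0)
      ≤ 3 * (1 / 3 : ℝ) ^ t * ((Fset n).card : ℝ) := by
    have he1 : ∑ j ∈ Finset.range n, (if t ≤ j then (3 : ℝ) ^ (n - (j + 1)) else 0)
        = ∑ j ∈ Finset.Ico t n, (3 : ℝ) ^ (n - (j + 1)) := by
      rw [← Finset.sum_filter]
      apply Finset.sum_congr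
      · ext j
        simp only [Finset.mem_filter, Finset.mem_range, Finset.mem_Ico]
        omega
      · intro j _; rfl
    have he2 : ∑ j ∈ Finset.Ico t n, (3 : ℝ) ^ (n - (j + 1))
        = ∑ k ∈ Finset.range (n - t), (3 : ℝ) ^ k := by
      apply Finset.sum_nbij' (i := fun j => n - (j + 1)) (j := fun k => n - (k + 1))
      · intro j hj; rw [Finset.mem_Ico] at hj; rw [Finset.mem_range]; omega
      · intro k hk; rw [Finset.mem_range] at hk; rw [Finset.mem_Ico]; omega
      · intro j hj; rw [Finset.mem_Ico] at hj; omega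
      · intro k hk; rw [Finset.mem_range] at hk; omega
      · intro j _; rfl
    have he3 : (3 : ℝ) ^ (n - t) = 3 * (1 / 3 : ℝ) ^ t * 3 ^ (n - 1) := by
      rw [pow_sub₀ (3 : ℝ) (by norm_num) htn]
      rw [div_pow, one_pow]
      field_simp
      rw [← pow_succ']
      congr 1
      omega
    calc ∑ j ∈ Finset.range n, (if t ≤ j then (3 : ℝ) ^ (n - (j + 1)) else 0)
        = ∑ k ∈ Finset.range (n - t), (3 : ℝ) ^ k := by rw [he1, he2]
      _ ≤ 3 ^ (n - t) := geom3_le _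
      _ = 3 * (1 / 3 : ℝ) ^ t * 3 ^ (n - 1) := he3
      _ ≤ 3 * (1 / 3 : ℝ) ^ t * ((Fset n).card : ℝ) := by
          apply mul_le_mul_of_nonneg_left hFge (by positivity)
  calc ((Bset n ε).card : ℝ)
      ≤ c1 * (∑ j ∈ Finset.range n, (3 : ℝ) ^ (n - (j + 1)))
        + ∑ j ∈ Finset.range n, (if t ≤ j then (3 : ℝ) ^ (n - (j + 1)) else 0) := by
        rw [← hsplit]; exact hstep
    _ ≤ c1 * ((Fset n).card : ℝ) + 3 * (1 / 3 : ℝ) ^ t * ((Fset n).card : ℝ) := by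
        rw [← hF]
        exact add_le_add_right htail _
    _ = (c1 + 3 * (1 / 3 : ℝ) ^ t) * ((Fset n).card : ℝ) := by ring

lemma cdgS_congr {n : ℕ} {ω ω' : ℕ → ℤ} (h : ∀ i < n, ω i = ω' i) :
    cdgS n ω = cdgS n ω' :=
  Finset.sum_congr rfl fun i hi => by rw [h i (Finset.mem_range.mp hi)]

lemma dependsOn_firstOne (n : ℕ) : DependsOn (firstOne n) n := by
  intro ω ω' h
  constructor
  · rintro ⟨j, hj, h1, h0⟩
    exact ⟨j, hj, by rw [← h j hj]; exact h1,
      fun k hk => by rw [← h k (by omega)]; exact h0 k hk⟩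
  · rintro ⟨j, hj, h1, h0⟩
    exact ⟨j, hj, by rw [h j hj]; exact h1,
      fun k hk => by rw [h k (by omega)]; exact h0 k hk⟩

lemma measurable_firstOne (n : ℕ) : MeasurableSet (firstOne n) :=
  measurableSet_of_dependsOn (dependsOn_firstOne n)

lemma dependsOn_good (n : ℕ) (ε : ℝ) : DependsOn (GoodSet n ε) n := by
  intro ω ω' h
  have hb : btilde n ω = btilde n ω' := by
    funext x
    rw [btilde, btilde, cdgS_congr h]
  have hfil : (Finset.Ico 1 n).filter (fun a =>
        btilde n ω (a - 1) = 1 ∧ btilde n ω a = 1 ∧ ω (a - 1) ≠ 1 ∧ ω a ≠ 1)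
      = (Finset.Ico 1 n).filter (fun a =>
        btilde n ω' (a - 1) = 1 ∧ btilde n ω' a = 1 ∧ ω' (a - 1) ≠ 1 ∧ ω' a ≠ 1) := by
    apply Finset.filter_congr
    intro a ha
    rw [Finset.mem_Ico] at ha
    rw [hb, h (a - 1) (by omega), h a (by omega)]
  simp only [GoodSet, Set.mem_setOf_eq, hfil]

lemma cond_good_ge (μ : Measure (ℕ → ℤ)) (hμ : IsCDGProductMeasure μ) {ε : ℝ}
    (hε : 0 < ε) (hε2 : ε ≤ 1 / 2) {n : ℕ} (hn2 : 2 ≤ ε * n) :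
    1 - ENNReal.ofReal (12 / (49 * ε ^ 2 * n) + 3 * (1 / 3 : ℝ) ^ (⌈ε * (n : ℝ)⌉₊))
        ≤ μ[|firstOne n] (GoodSet n ε)
      ∧ μ[|firstOne n] (GoodSet n ε) ≤ 1 := by
  have hn4 : (4 : ℝ) ≤ n := by nlinarith
  have hn4' : 4 ≤ n := by exact_mod_cast hn4
  set δ : ℝ := 12 / (49 * ε ^ 2 * n) + 3 * (1 / 3 : ℝ) ^ (⌈ε * (n : ℝ)⌉₊) with hδ
  have hδ0 : 0 ≤ δ := by positivity
  have hdF : DependsOn (firstOne n) n := dependsOn_firstOne n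
  have hdB : DependsOn (firstOne n ∩ (GoodSet n ε)ᶜ) n := fun ω ω' h =>
    and_congr (hdF ω ω' h) (not_congr (dependsOn_good n ε ω ω' h))
  have hF := measure_of_dependsOn μ hμ hdF
  rw [show (box n).filter (fun v => ext n v ∈ firstOne n) = Fset n from rfl] at hF
  have hB := measure_of_dependsOn μ hμ hdB
  rw [Finset.filter_congr_decidable] at hB
  rw [show (box n).filter (fun v => ext n v ∈ firstOne n ∩ (GoodSet n ε)ᶜ) = Bset n ε
    from rfl] at hB
  have hFcard : 0 < (Fset n).card := by
    rw [card_Fset]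
    have h0 : 0 ∈ Finset.range n := Finset.mem_range.mpr (by omega)
    have h1 : 0 < 3 ^ (n - (0 + 1)) := by positivity
    have h2 : 3 ^ (n - (0 + 1)) ≤ ∑ j ∈ Finset.range n, 3 ^ (n - (j + 1)) :=
      Finset.single_le_sum (f := fun j => 3 ^ (n - (j + 1))) (fun i _ => Nat.zero_le _) h0
    omega
  have hq0 : ((1 : ENNReal) / 3) ^ n ≠ 0 := by
    apply pow_ne_zero
    rw [one_div]
    exact ENNReal.inv_ne_zero.mpr (by norm_num)
  have hqtop : ((1 : ENNReal) / 3) ^ n ≠ ⊤ := by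
    apply ENNReal.pow_ne_top
    rw [one_div]
    exact ENNReal.inv_ne_top.mpr (by norm_num)
  have hμF0 : μ (firstOne n) ≠ 0 := by
    rw [hF]
    exact mul_ne_zero (Nat.cast_ne_zero.mpr (by omega)) hq0
  have hμFtop : μ (firstOne n) ≠ ⊤ := by
    rw [hF]
    exact ENNReal.mul_ne_top (ENNReal.natCast_ne_top _) hqtop
  have hcast : ((Bset n ε).card : ENNReal)
      ≤ ENNReal.ofReal δ * ((Fset n).card : ENNReal) := by
    have hreal := card_Bset_le hε hε2 hn2
    calc ((Bset n ε).card : ENNReal)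
        = ENNReal.ofReal ((Bset n ε).card : ℝ) := (ENNReal.ofReal_natCast _).symm
      _ ≤ ENNReal.ofReal (δ * ((Fset n).card : ℝ)) := ENNReal.ofReal_le_ofReal hreal
      _ = ENNReal.ofReal δ * ENNReal.ofReal ((Fset n).card : ℝ) :=
          ENNReal.ofReal_mul hδ0
      _ = ENNReal.ofReal δ * ((Fset n).card : ENNReal) := by
          rw [ENNReal.ofReal_natCast]
  have hkey : μ (firstOne n ∩ (GoodSet n ε)ᶜ) ≤ ENNReal.ofReal δ * μ (firstOne n) := by
    rw [hB, hF]
    calc ((Bset n ε).card : ENNReal) * ((1 : ENNReal) / 3) ^ n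
        ≤ (ENNReal.ofReal δ * ((Fset n).card : ENNReal)) * ((1 : ENNReal) / 3) ^ n :=
          mul_le_mul_left hcast _
      _ = ENNReal.ofReal δ * (((Fset n).card : ENNReal) * ((1 : ENNReal) / 3) ^ n) := by
          ring
  haveI : IsProbabilityMeasure (μ[|firstOne n]) :=
    cond_isProbabilityMeasure_of_finite hμF0 hμFtop
  have hcompl : μ[|firstOne n] (GoodSet n ε)ᶜ ≤ ENNReal.ofReal δ := by
    rw [cond_apply (measurable_firstOne n)]
    calc (μ (firstOne n))⁻¹ * μ (firstOne n ∩ (GoodSet n ε)ᶜ)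
        ≤ (μ (firstOne n))⁻¹ * (ENNReal.ofReal δ * μ (firstOne n)) :=
          mul_le_mul_right hkey _
      _ = ENNReal.ofReal δ * ((μ (firstOne n))⁻¹ * μ (firstOne n)) := by ring
      _ = ENNReal.ofReal δ := by
          rw [ENNReal.inv_mul_cancel hμF0 hμFtop, mul_one]
  constructor
  · have h1 : (1 : ENNReal) ≤ μ[|firstOne n] (GoodSet n ε) + ENNReal.ofReal δ := by
      calc (1 : ENNReal) = μ[|firstOne n] Set.univ := measure_univ.symm
        _ = μ[|firstOne n] (GoodSet n ε ∪ (GoodSet n ε)ᶜ) := by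
            rw [Set.union_compl_self]
        _ ≤ μ[|firstOne n] (GoodSet n ε) + μ[|firstOne n] (GoodSet n ε)ᶜ :=
            measure_union_le _ _
        _ ≤ μ[|firstOne n] (GoodSet n ε) + ENNReal.ofReal δ :=
            add_le_add_right hcompl _
    exact tsub_le_iff_right.mpr h1
  · exact prob_le_one


lemma cond_le_one (μ : Measure (ℕ → ℤ)) (s t : Set (ℕ → ℤ)) (hs : MeasurableSet s) :
    μ[|s] t ≤ 1 := by
  rw [cond_apply hs]
  calc (μ s)⁻¹ * μ (s ∩ t) ≤ (μ s)⁻¹ * μ s :=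
        mul_le_mul_right (measure_mono Set.inter_subset_left) _
    _ ≤ 1 := ENNReal.inv_mul_le_one _

end
end CDG8

/-- with `n₄(ω)` the number of `a ∈ {1,…,n−1}` with `b̃_{a-1} = 1`, `b̃_a = 1`, `b_{a-1} ≠ 1`, `b_a ≠ 1`, for every `ε > 0` the conditional probability `μ((1/9 − ε)n < n₄ < (1/9 + ε)n ∣ F_n) → 1` as `n → ∞`. -/
theorem stmt_8 (μ : Measure (ℕ → ℤ)) (hμ : IsCDGProductMeasure μ) (ε : ℝ) (hε : 0 < ε) :
    Tendsto (fun n : ℕ =>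
      μ[|firstOne n] {ω : ℕ → ℤ |
        (1 / 9 - ε) * n <
          (((Finset.Ico 1 n).filter (fun a =>
            btilde n ω (a - 1) = 1 ∧ btilde n ω a = 1 ∧ ω (a - 1) ≠ 1 ∧ ω a ≠ 1)).card : ℝ) ∧
        (((Finset.Ico 1 n).filter (fun a =>
            btilde n ω (a - 1) = 1 ∧ btilde n ω a = 1 ∧ ω (a - 1) ≠ 1 ∧ ω a ≠ 1)).card : ℝ) <
          (1 / 9 + ε) * n})
      atTop (nhds 1) := by
  have hε'pos : 0 < min ε (1 / 2) := lt_min hε (by norm_num)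
  have hε'le2 : min ε (1 / 2) ≤ 1 / 2 := min_le_right _ _
  have hε'le : min ε (1 / 2) ≤ ε := min_le_left _ _
  set ε' := min ε (1 / 2) with hε'def
  set δ : ℕ → ℝ := fun n => 12 / (49 * ε' ^ 2 * n) + 3 * (1 / 3 : ℝ) ^ (⌈ε' * (n : ℝ)⌉₊)
    with hδdef
  have hδ0 : Tendsto δ atTop (nhds 0) := by
    have h1 : Tendsto (fun n : ℕ => 12 / (49 * ε' ^ 2 * (n : ℝ))) atTop (nhds 0) := by
      have h := tendsto_const_div_atTop_nhds_zero_nat (12 / (49 * ε' ^ 2))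
      have heq : (fun n : ℕ => 12 / (49 * ε' ^ 2) / (n : ℝ))
          = fun n : ℕ => 12 / (49 * ε' ^ 2 * (n : ℝ)) := by
        funext n
        rw [div_div]
      rwa [heq] at h
    have h2 : Tendsto (fun n : ℕ => 3 * (1 / 3 : ℝ) ^ (⌈ε' * (n : ℝ)⌉₊)) atTop (nhds 0) := by
      have hp : Tendsto (fun k : ℕ => (1 / 3 : ℝ) ^ k) atTop (nhds 0) :=
        tendsto_pow_atTop_nhds_zero_of_lt_one (by norm_num) (by norm_num)
      have hc : Tendsto (fun n : ℕ => ⌈ε' * (n : ℝ)⌉₊) atTop atTop :=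
        tendsto_nat_ceil_atTop.comp
          (Tendsto.const_mul_atTop hε'pos tendsto_natCast_atTop_atTop)
      have h3 := (hp.comp hc).const_mul (3 : ℝ)
      simpa using h3
    simpa [hδdef] using h1.add h2
  have hlow : Tendsto (fun n : ℕ => 1 - ENNReal.ofReal (δ n)) atTop (nhds 1) := by
    have h0 : Tendsto (fun n : ℕ => ENNReal.ofReal (δ n)) atTop (nhds 0) := by
      rw [← ENNReal.ofReal_zero]
      exact ENNReal.tendsto_ofReal hδ0
    have h1 := ENNReal.Tendsto.sub
      (tendsto_const_nhds : Tendsto (fun _ : ℕ => (1 : ENNReal)) atTop (nhds 1)) h0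
      (Or.inl ENNReal.one_ne_top)
    simpa using h1
  have hev : ∀ᶠ n : ℕ in atTop, 2 ≤ ε' * (n : ℝ) :=
    (Tendsto.const_mul_atTop hε'pos tendsto_natCast_atTop_atTop).eventually_ge_atTop 2
  apply tendsto_of_tendsto_of_tendsto_of_le_of_le' hlow tendsto_const_nhds
  · filter_upwards [hev] with n hn
    refine le_trans (CDG8.cond_good_ge μ hμ hε'pos hε'le2 hn).1 ?_
    apply measure_mono
    intro ω hω
    obtain ⟨h1, h2⟩ := hω
    have hn0 : (0 : ℝ) ≤ (n : ℝ) := Nat.cast_nonneg n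
    constructor
    · calc (1 / 9 - ε) * (n : ℝ) ≤ (1 / 9 - ε') * n :=
            mul_le_mul_of_nonneg_right (by linarith) hn0
        _ < _ := h1
    · exact lt_of_lt_of_le h2 (mul_le_mul_of_nonneg_right (by linarith) hn0)
  · filter_upwards [] with n
    exact CDG8.cond_le_one μ (firstOne n) _ (CDG8.measurable_firstOne n)
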